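/- Let ψ : [θ₀, θ₁] → [0, π] be continuously differentiable and monotone with |Δ'(e^{iθ})| ≤ M on the band, where dψ/dθ = Δ'(e^{iθ})/(2 sin ψ) holds wherever sin ψ ≠ 0. Then for every t ∈ (1,2) there is a constant D = D(M, q, t) such that ∫ |（1/(qπ)) dψ/dθ|^t dθ ≤ D, where the integral is over the union of the bands. -/

import Mathlib

open Set MeasureTheory intervalIntegral

private lemma deriv_nonneg_of_monotoneOn' {f : ℝ → ℝ} {a b x d : ℝ}
    (hm : MonotoneOn f (Icc a b)) (hx : x ∈ Ioo a b) (hd : HasDerivAt f d x) : 0 ≤ d := by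
  have ht : Filter.Tendsto (slope f x) (nhdsWithin x (Ioi x)) (nhds d) :=
    (hasDerivAt_iff_tendsto_slope.mp hd).mono_left
      (nhdsWithin_mono x (fun y hy => ne_of_gt hy : Ioi x ⊆ {x}ᶜ))
  refine ge_of_tendsto ht ?_
  filter_upwards [Ioo_mem_nhdsGT hx.2] with y hy
  rw [slope_def_field]
  apply div_nonneg _ (by linarith [hy.1])
  have := hm (Ioo_subset_Icc_self hx) ⟨hx.1.le.trans hy.1.le, hy.2.le⟩ hy.1.le
  linarith

private lemma band_bound (M : ℝ) (hM : 0 ≤ M) (q : ℕ) (hq : 0 < q) (t : ℝ)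
    (ht1 : 1 < t) (ht2 : t < 2) (a b : ℝ) (ψ : ℝ → ℝ) (hab : a ≤ b)
    (hC : ContDiffOn ℝ 1 ψ (Icc a b)) (hmono : MonotoneOn ψ (Icc a b))
    (hrange : ∀ x ∈ Icc a b, ψ x ∈ Icc 0 Real.pi)
    (hQ : ∀ x ∈ Icc a b, |deriv ψ x| * (2 * Real.sin (ψ x)) ≤ M) :
    ∫ x in a..b, |deriv ψ x / (q * Real.pi)| ^ t ≤
      2 * ((M * Real.pi / 4) ^ (t - 1) / ((q * Real.pi) ^ t)) / (2 - t) * Real.pi ^ (2 - t) := by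
  have hπ : (0:ℝ) < Real.pi := Real.pi_pos
  have hq' : (0:ℝ) < q := Nat.cast_pos.mpr hq
  have hqπ : (0:ℝ) < (q:ℝ) * Real.pi := by positivity
  set K : ℝ := (M * Real.pi / 4) ^ (t - 1) / ((q : ℝ) * Real.pi) ^ t with hKdef
  have hK0 : 0 ≤ K := by
    apply div_nonneg (Real.rpow_nonneg (by positivity) _) (Real.rpow_nonneg (by positivity) _)
  have hKK0 : 0 ≤ K / (2 - t) := div_nonneg hK0 (by linarith)
  have hP0 : 0 ≤ Real.pi ^ (2 - t) := Real.rpow_nonneg hπ.le _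
  have hD0 : (0:ℝ) ≤ 2 * K / (2-t) * Real.pi ^ (2 - t) :=
    mul_nonneg (div_nonneg (by linarith) (by linarith)) hP0
  rcases hab.eq_or_lt with rfl | hlt
  · rw [intervalIntegral.integral_same]; linarith [hD0]
  -- main case: a < b
  set φ : ℝ → ℝ := fun x => |deriv ψ x / ((q:ℝ) * Real.pi)| ^ t with hφdef
  set w : ℝ → ℝ := derivWithin ψ (Icc a b) with hwdef
  have hwcont : ContinuousOn w (Icc a b) :=
    hC.continuousOn_derivWithin (uniqueDiffOn_Icc hlt) le_rfl
  have hwd : ∀ x ∈ Ioo a b, deriv ψ x = w x := fun x hx =>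
    (derivWithin_of_mem_nhds (Icc_mem_nhds hx.1 hx.2)).symm
  have hHD : ∀ x ∈ Ioo a b, HasDerivAt ψ (deriv ψ x) x := fun x hx =>
    ((hC.differentiableOn one_ne_zero x (Ioo_subset_Icc_self hx)).differentiableAt
      (Icc_mem_nhds hx.1 hx.2)).hasDerivAt
  set φt : ℝ → ℝ := fun x => |w x / ((q:ℝ) * Real.pi)| ^ t with hφtdef
  have hφtcont : ContinuousOn φt (Icc a b) := by
    apply ContinuousOn.rpow_const ((hwcont.div_const _).abs)
    intro x _; right; linarith
  have hφtint : IntegrableOn φt (Icc a b) := hφtcont.integrableOn_Icc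
  have hmz : MeasureTheory.volume ({a, b} : Set ℝ) = 0 := by
    rw [Set.insert_eq]
    exact measure_union_null (measure_singleton a) (measure_singleton b)
  have key_ae : φt =ᵐ[volume.restrict (Icc a b)] φ := by
    rw [Filter.EventuallyEq, ae_restrict_iff' measurableSet_Icc]
    have hcompl : ∀ᵐ x : ℝ ∂volume, x ∉ ({a, b} : Set ℝ) :=
      MeasureTheory.measure_eq_zero_iff_ae_notMem.mp hmz
    filter_upwards [hcompl] with x hx hxI
    have hxa : x ≠ a := fun h => hx (by simp [h])
    have hxb : x ≠ b := fun h => hx (by simp [h])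
    have hxo : x ∈ Ioo a b := ⟨lt_of_le_of_ne hxI.1 (Ne.symm hxa), lt_of_le_of_ne hxI.2 hxb⟩
    simp only [hφdef, hφtdef, hwd x hxo]
  have hφint : IntegrableOn φ (Icc a b) := hφtint.congr key_ae
  have hII : IntervalIntegrable φ volume a b :=
    (intervalIntegrable_iff_integrableOn_Icc_of_le hab).mpr hφint
  -- the flat pieces
  set S0 : Set ℝ := insert a {x ∈ Icc a b | ψ x = 0} with hS0def
  set S1 : Set ℝ := insert b {x ∈ Icc a b | ψ x = Real.pi} with hS1def
  set c : ℝ := sSup S0 with hcdef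
  set d : ℝ := sInf S1 with hddef
  have hS0ne : S0.Nonempty := ⟨a, mem_insert _ _⟩
  have hS1ne : S1.Nonempty := ⟨b, mem_insert _ _⟩
  have hS0bdd : BddAbove S0 := ⟨b, fun y hy =>
    (Set.mem_insert_iff.mp hy).elim (fun h => h ▸ hab) (fun h => h.1.2)⟩
  have hS1bdd : BddBelow S1 := ⟨a, fun y hy =>
    (Set.mem_insert_iff.mp hy).elim (fun h => h ▸ hab) (fun h => h.1.1)⟩
  have hac : a ≤ c := le_csSup hS0bdd (mem_insert _ _)
  have hcb : c ≤ b := csSup_le hS0ne (fun y hy =>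
    (Set.mem_insert_iff.mp hy).elim (fun h => h ▸ hab) (fun h => h.1.2))
  have hdb : d ≤ b := csInf_le hS1bdd (mem_insert _ _)
  have had : a ≤ d := le_csInf hS1ne (fun y hy =>
    (Set.mem_insert_iff.mp hy).elim (fun h => h ▸ hab) (fun h => h.1.1))
  have hzero : ∀ x ∈ Ioo a c, ψ x = 0 := by
    intro x hx
    obtain ⟨y, hyS, hxy⟩ := exists_lt_of_lt_csSup hS0ne hx.2
    rcases hyS with rfl | ⟨hyI, hy0⟩
    · exact absurd hxy (not_lt.mpr hx.1.le)
    · have hx_mem : x ∈ Icc a b := ⟨hx.1.le, hxy.le.trans hyI.2⟩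
      have h1 := hmono hx_mem hyI hxy.le
      have h0 := (hrange x hx_mem).1
      rw [hy0] at h1; linarith
  have hpi : ∀ x ∈ Ioo d b, ψ x = Real.pi := by
    intro x hx
    obtain ⟨y, hyS, hxy⟩ := exists_lt_of_csInf_lt hS1ne hx.1
    rcases hyS with rfl | ⟨hyI, hy0⟩
    · exact absurd hxy (not_lt.mpr hx.2.le)
    · have hx_mem : x ∈ Icc a b := ⟨hyI.1.trans hxy.le, hx.2.le⟩
      have h1 := hmono hyI hx_mem hxy.le
      have h0 := (hrange x hx_mem).2
      rw [hy0] at h1; linarith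
  have hcd : c ≤ d := by
    by_contra h
    push_neg at h
    obtain ⟨x, hdx, hxc⟩ := exists_between h
    have h1 : ψ x = 0 := hzero x ⟨lt_of_le_of_lt had hdx, hxc⟩
    have h2 : ψ x = Real.pi := hpi x ⟨hdx, lt_of_lt_of_le hxc hcb⟩
    rw [h1] at h2; linarith
  have hdz : ∀ x ∈ Ioo a c, deriv ψ x = 0 := by
    intro x hx
    have hev : ψ =ᶠ[nhds x] (fun _ => (0:ℝ)) := by
      filter_upwards [Ioo_mem_nhds hx.1 hx.2] with y hy using hzero y hy
    rw [hev.deriv_eq]; exact deriv_const x 0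
  have hdp : ∀ x ∈ Ioo d b, deriv ψ x = 0 := by
    intro x hx
    have hev : ψ =ᶠ[nhds x] (fun _ => Real.pi) := by
      filter_upwards [Ioo_mem_nhds hx.1 hx.2] with y hy using hpi y hy
    rw [hev.deriv_eq]; exact deriv_const x Real.pi
  have hφ0 : ∀ x, deriv ψ x = 0 → φ x = 0 := by
    intro x hx
    simp only [hφdef, hx, zero_div, abs_zero]
    exact Real.zero_rpow (by linarith)
  -- interval integrability of the pieces
  have hIIac : IntervalIntegrable φ volume a c := by
    apply hII.mono_set; rw [uIcc_of_le hac, uIcc_of_le hab]; exact Icc_subset_Icc le_rfl hcb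
  have hIIcd : IntervalIntegrable φ volume c d := by
    apply hII.mono_set; rw [uIcc_of_le hcd, uIcc_of_le hab]; exact Icc_subset_Icc hac hdb
  have hIIdb : IntervalIntegrable φ volume d b := by
    apply hII.mono_set; rw [uIcc_of_le hdb, uIcc_of_le hab]; exact Icc_subset_Icc had le_rfl
  have hIIcb : IntervalIntegrable φ volume c b := by
    apply hII.mono_set; rw [uIcc_of_le (hcd.trans hdb), uIcc_of_le hab]
    exact Icc_subset_Icc hac le_rfl
  have hsplit : ∫ x in a..b, φ x =
      (∫ x in a..c, φ x) + (∫ x in c..d, φ x) + (∫ x in d..b, φ x) := by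
    have e1 := integral_add_adjacent_intervals hIIac hIIcb
    have e2 := integral_add_adjacent_intervals hIIcd hIIdb
    rw [← e1, ← e2]; ring
  have hz1 : ∫ x in a..c, φ x = 0 := by
    rw [intervalIntegral.integral_of_le hac,
      ← MeasureTheory.setIntegral_congr_set MeasureTheory.Ioo_ae_eq_Ioc]
    rw [MeasureTheory.setIntegral_congr_fun measurableSet_Ioo
      (fun x hx => hφ0 x (hdz x hx) : Set.EqOn φ (fun _ => (0:ℝ)) (Ioo a c))]
    simp
  have hz2 : ∫ x in d..b, φ x = 0 := by
    rw [intervalIntegral.integral_of_le hdb,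
      ← MeasureTheory.setIntegral_congr_set MeasureTheory.Ioo_ae_eq_Ioc]
    rw [MeasureTheory.setIntegral_congr_fun measurableSet_Ioo
      (fun x hx => hφ0 x (hdp x hx) : Set.EqOn φ (fun _ => (0:ℝ)) (Ioo d b))]
    simp
  -- middle piece via FTC inequality
  set g : ℝ → ℝ := fun y => K / (2 - t) * ((ψ y) ^ (2-t) - (Real.pi - ψ y) ^ (2-t)) with hgdef
  set g' : ℝ → ℝ := fun x => K * ((ψ x) ^ (1-t) + (Real.pi - ψ x) ^ (1-t)) * deriv ψ x with hg'def
  have hψcont : ContinuousOn ψ (Icc c d) := hC.continuousOn.mono (Icc_subset_Icc hac hdb)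
  have hgcont : ContinuousOn g (Icc c d) := by
    apply ContinuousOn.mul continuousOn_const
    apply ContinuousOn.sub
    · exact hψcont.rpow_const (fun x _ => Or.inr (by linarith))
    · exact (continuousOn_const.sub hψcont).rpow_const (fun x _ => Or.inr (by linarith))
  have hmem : ∀ x ∈ Ioo c d, x ∈ Ioo a b := fun x hx =>
    ⟨hac.trans_lt hx.1, hx.2.trans_le hdb⟩
  have hpos : ∀ x ∈ Ioo c d, 0 < ψ x ∧ ψ x < Real.pi := by
    intro x hx
    have hxI : x ∈ Icc a b := Ioo_subset_Icc_self (hmem x hx)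
    constructor
    · rcases (hrange x hxI).1.lt_or_eq with h | h
      · exact h
      · exfalso
        have : x ≤ c := le_csSup hS0bdd (Set.mem_insert_of_mem _ ⟨hxI, h.symm⟩)
        linarith [hx.1]
    · rcases (hrange x hxI).2.lt_or_eq with h | h
      · exact h
      · exfalso
        have : d ≤ x := csInf_le hS1bdd (Set.mem_insert_of_mem _ ⟨hxI, h⟩)
        linarith [hx.2]
  have hder : ∀ x ∈ Ioo c d, HasDerivWithinAt g (g' x) (Ioi x) x := by
    intro x hx
    obtain ⟨hs0, hs1⟩ := hpos x hx
    have hψd : HasDerivAt ψ (deriv ψ x) x := hHD x (hmem x hx)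
    have H1 : HasDerivAt (fun y => (ψ y) ^ (2-t))
        ((2-t) * (ψ x) ^ (2-t-1) * deriv ψ x) x :=
      (Real.hasDerivAt_rpow_const (p := 2-t) (Or.inl hs0.ne')).comp x hψd
    have H2 : HasDerivAt (fun y => (Real.pi - ψ y) ^ (2-t))
        ((2-t) * (Real.pi - ψ x) ^ (2-t-1) * (-deriv ψ x)) x :=
      by have h := (Real.hasDerivAt_rpow_const (x := Real.pi - ψ x) (p := 2-t)
          (Or.inl (sub_pos.mpr hs1).ne' : Real.pi - ψ x ≠ 0 ∨ 1 ≤ 2-t)).comp x (hψd.const_sub Real.pi)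
         exact h
    have Hg := ((H1.sub H2).const_mul (K / (2-t)))
    have hexp : (2:ℝ) - t - 1 = 1 - t := by ring
    rw [hexp] at Hg
    have : K / (2-t) * ((2-t) * (ψ x) ^ (1-t) * deriv ψ x -
        (2-t) * (Real.pi - ψ x) ^ (1-t) * (-deriv ψ x)) = g' x := by
      rw [hg'def]
      have h2t : (2:ℝ) - t ≠ 0 := by linarith
      field_simp [h2t]
      ring
    rw [this] at Hg
    exact Hg.hasDerivWithinAt
  have hineq : ∀ x ∈ Ioo c d, φ x ≤ g' x := by
    intro x hx
    obtain ⟨hs0, hs1⟩ := hpos x hx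
    have hψd : HasDerivAt ψ (deriv ψ x) x := hHD x (hmem x hx)
    have hxI : x ∈ Icc a b := Ioo_subset_Icc_self (hmem x hx)
    set dd : ℝ := deriv ψ x with hdddef
    set s : ℝ := ψ x with hsdef
    have hdd0 : 0 ≤ dd := deriv_nonneg_of_monotoneOn' hmono (hmem x hx) hψd
    have hu0 : 0 ≤ s ^ (1-t) := Real.rpow_nonneg hs0.le _
    have hv0 : 0 ≤ (Real.pi - s) ^ (1-t) := Real.rpow_nonneg (by linarith) _
    rcases hdd0.eq_or_lt with h0 | hddpos
    · have : φ x = 0 := hφ0 x h0.symm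
      rw [this, hg'def]
      simp only [← hdddef, ← h0]
      nlinarith [hu0, hv0, hK0]
    -- main case : dd > 0
    set m : ℝ := min s (Real.pi - s) with hmdef
    have hm0 : 0 < m := lt_min hs0 (by linarith)
    have hQx : dd * (2 * Real.sin s) ≤ M := by
      have := hQ x hxI
      rwa [abs_of_nonneg hdd0] at this
    have hsin : 2 / Real.pi * m ≤ Real.sin s := by
      rcases le_or_gt s (Real.pi / 2) with h | h
      · calc 2 / Real.pi * m ≤ 2 / Real.pi * s := by
              apply mul_le_mul_of_nonneg_left (min_le_left _ _) (by positivity)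
          _ ≤ Real.sin s := Real.mul_le_sin hs0.le h
      · rw [← Real.sin_pi_sub]
        calc 2 / Real.pi * m ≤ 2 / Real.pi * (Real.pi - s) := by
              apply mul_le_mul_of_nonneg_left (min_le_right _ _) (by positivity)
          _ ≤ Real.sin (Real.pi - s) := Real.mul_le_sin (by linarith) (by linarith)
    have hdd_le : dd ≤ M * Real.pi / (4 * m) := by
      rw [le_div_iff₀ (by positivity)]
      have h5 : dd * (2 / Real.pi * m) ≤ dd * Real.sin s :=
        mul_le_mul_of_nonneg_left hsin hdd0
      have h5' := mul_le_mul_of_nonneg_left h5 (by positivity : (0:ℝ) ≤ 2 * Real.pi)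
      have e : 2 * Real.pi * (dd * (2 / Real.pi * m)) = dd * (4 * m) := by
        field_simp; ring
      have h7 : dd * (4 * m) ≤ 2 * Real.pi * (dd * Real.sin s) := by rw [← e]; exact h5'
      have h8 : Real.pi * (dd * (2 * Real.sin s)) ≤ Real.pi * M :=
        mul_le_mul_of_nonneg_left hQx hπ.le
      linarith [h7, h8]
    have hpow : dd ^ (t-1) ≤ (M * Real.pi / 4) ^ (t-1) * m ^ (1-t) := by
      have h6 : dd ^ (t-1) ≤ (M * Real.pi / (4 * m)) ^ (t-1) :=
        Real.rpow_le_rpow hdd0 hdd_le (by linarith)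
      have h7 : (M * Real.pi / (4 * m)) ^ (t-1) = (M * Real.pi / 4) ^ (t-1) * m ^ (1-t) := by
        rw [show M * Real.pi / (4 * m) = (M * Real.pi / 4) / m by ring,
          Real.div_rpow (by positivity) hm0.le,
          show (1:ℝ) - t = -(t-1) by ring, Real.rpow_neg hm0.le, div_eq_mul_inv]
      rw [← h7]; exact h6
    have hmax : m ^ (1-t) ≤ s ^ (1-t) + (Real.pi - s) ^ (1-t) := by
      rcases min_cases s (Real.pi - s) with ⟨hm, _⟩ | ⟨hm, _⟩
      · rw [hmdef, hm]; linarith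
      · rw [hmdef, hm]; linarith
    have hA : dd ^ (t-1) ≤ (M * Real.pi / 4) ^ (t-1) * (s ^ (1-t) + (Real.pi - s) ^ (1-t)) :=
      hpow.trans (mul_le_mul_of_nonneg_left hmax (Real.rpow_nonneg (by positivity) _))
    have hφx : φ x = dd ^ t / ((q:ℝ) * Real.pi) ^ t := by
      rw [hφdef]
      simp only [← hdddef]
      rw [abs_of_nonneg (div_nonneg hdd0 hqπ.le), Real.div_rpow hdd0 hqπ.le]
    have hddt : dd ^ t = dd ^ (t-1) * dd := by
      rw [show t = (t-1) + 1 by ring, Real.rpow_add hddpos, Real.rpow_one]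
      ring_nf
    rw [hφx, hddt, hg'def, hKdef]
    rw [div_le_iff₀ (Real.rpow_pos_of_pos hqπ _)]
    calc dd ^ (t-1) * dd
        ≤ ((M * Real.pi / 4) ^ (t-1) * (s ^ (1-t) + (Real.pi - s) ^ (1-t))) * dd :=
          mul_le_mul_of_nonneg_right hA hdd0
      _ = (M * Real.pi / 4) ^ (t-1) / ((q:ℝ) * Real.pi) ^ t *
            (s ^ (1-t) + (Real.pi - s) ^ (1-t)) * dd * ((q:ℝ) * Real.pi) ^ t := by
          field_simp
  have hφint_cd : IntegrableOn φ (Icc c d) := hφint.mono_set (Icc_subset_Icc hac hdb)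
  have hmid : ∫ x in c..d, φ x ≤ g d - g c :=
    intervalIntegral.integral_le_sub_of_hasDeriv_right_of_le hcd hgcont hder hφint_cd hineq
  have hgbound : ∀ y, y ∈ Icc a b → |g y| ≤ K / (2-t) * Real.pi ^ (2-t) := by
    intro y hy
    have h1 : 0 ≤ (ψ y) ^ (2-t) := Real.rpow_nonneg (hrange y hy).1 _
    have h2 : (ψ y) ^ (2-t) ≤ Real.pi ^ (2-t) :=
      Real.rpow_le_rpow (hrange y hy).1 (hrange y hy).2 (by linarith)
    have h3 : 0 ≤ (Real.pi - ψ y) ^ (2-t) := Real.rpow_nonneg (by linarith [(hrange y hy).2]) _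
    have h4 : (Real.pi - ψ y) ^ (2-t) ≤ Real.pi ^ (2-t) :=
      Real.rpow_le_rpow (by linarith [(hrange y hy).2]) (by linarith [(hrange y hy).1])
        (by linarith)
    rw [hgdef, abs_mul, abs_of_nonneg hKK0]
    apply mul_le_mul_of_nonneg_left _ hKK0
    rw [abs_le]
    constructor <;> linarith
  have hgc := hgbound c ⟨hac, hcb⟩
  have hgd := hgbound d ⟨had, hdb⟩
  have hfinal : g d - g c ≤ 2 * K / (2-t) * Real.pi ^ (2-t) := by
    have h1 := abs_le.mp hgc
    have h2 := abs_le.mp hgd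
    have : 2 * K / (2-t) * Real.pi ^ (2-t) = 2 * (K / (2-t) * Real.pi ^ (2-t)) := by ring
    rw [this]
    linarith
  calc ∫ x in a..b, φ x = (∫ x in a..c, φ x) + (∫ x in c..d, φ x) + (∫ x in d..b, φ x) :=
        hsplit
    _ = ∫ x in c..d, φ x := by rw [hz1, hz2]; ring
    _ ≤ g d - g c := hmid
    _ ≤ 2 * K / (2-t) * Real.pi ^ (2-t) := hfinal
    _ = 2 * ((M * Real.pi / 4) ^ (t-1) / ((q:ℝ) * Real.pi) ^ t) / (2-t) * Real.pi ^ (2-t) := by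
        rw [hKdef]

/-- Integrability of the density of states (Lemma 3.1): let the `q` bands be intervals
`[aᵢ, bᵢ]` carrying `C¹` monotone functions `ψᵢ` with values in `[0, π]` satisfying
`|ψᵢ'(θ)| · 2 sin(ψᵢ(θ)) ≤ M` (i.e. `|Δ'| ≤ M` in `ψ' = Δ'/(2 sin ψ)`).  Then for
every `t ∈ (1,2)` there is a constant `D = D(M,q,t)` bounding
`∫ |(1/(qπ)) ψ'|^t dθ` over the union of the bands. -/
theorem density_of_states_Lt_bound
    (M : ℝ) (hM : 0 ≤ M) (q : ℕ) (hq : 0 < q) (t : ℝ) (ht1 : 1 < t) (ht2 : t < 2) :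
    ∃ D : ℝ, ∀ (a b : Fin q → ℝ) (ψ : Fin q → ℝ → ℝ),
      (∀ i, a i ≤ b i) →
      (∀ i, ContDiffOn ℝ 1 (ψ i) (Icc (a i) (b i))) →
      (∀ i, MonotoneOn (ψ i) (Icc (a i) (b i)) ∨ AntitoneOn (ψ i) (Icc (a i) (b i))) →
      (∀ i, ∀ x ∈ Icc (a i) (b i), ψ i x ∈ Icc 0 Real.pi) →
      (∀ i, ∀ x ∈ Icc (a i) (b i), |deriv (ψ i) x| * (2 * Real.sin (ψ i x)) ≤ M) →
      ∑ i, ∫ x in (a i)..(b i), |deriv (ψ i) x / (q * Real.pi)| ^ t ≤ D := by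
  set D0 : ℝ := 2 * ((M * Real.pi / 4) ^ (t - 1) / (((q:ℝ) * Real.pi) ^ t)) / (2 - t) *
    Real.pi ^ (2 - t) with hD0def
  refine ⟨q * D0, ?_⟩
  intro a b ψ hab hC hmono hrange hQ
  have hband : ∀ i, ∫ x in (a i)..(b i), |deriv (ψ i) x / (q * Real.pi)| ^ t ≤ D0 := by
    intro i
    rcases hmono i with hm | hm
    · exact band_bound M hM q hq t ht1 ht2 (a i) (b i) (ψ i) (hab i) (hC i) hm
        (hrange i) (hQ i)
    · -- antitone case: apply to χ = π - ψ i
      set χ : ℝ → ℝ := fun x => Real.pi - ψ i x with hχdef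
      have hC' : ContDiffOn ℝ 1 χ (Icc (a i) (b i)) := contDiffOn_const.sub (hC i)
      have hm' : MonotoneOn χ (Icc (a i) (b i)) := by
        intro x hx y hy hxy
        have := hm hx hy hxy
        simp only [hχdef]
        linarith
      have hr' : ∀ x ∈ Icc (a i) (b i), χ x ∈ Icc 0 Real.pi := by
        intro x hx
        obtain ⟨h1, h2⟩ := hrange i x hx
        refine ⟨?_, ?_⟩ <;> simp only [hχdef] <;> linarith
      have hdχ : ∀ x, deriv χ x = -deriv (ψ i) x := fun x => deriv_const_sub _
      have hQ' : ∀ x ∈ Icc (a i) (b i), |deriv χ x| * (2 * Real.sin (χ x)) ≤ M := by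
        intro x hx
        rw [hdχ x, abs_neg, hχdef]
        simp only [Real.sin_pi_sub]
        exact hQ i x hx
      have h := band_bound M hM q hq t ht1 ht2 (a i) (b i) χ (hab i) hC' hm' hr' hQ'
      have heq : ∫ x in (a i)..(b i), |deriv χ x / (q * Real.pi)| ^ t =
          ∫ x in (a i)..(b i), |deriv (ψ i) x / (q * Real.pi)| ^ t := by
        apply intervalIntegral.integral_congr
        intro x _
        simp only [hdχ x, neg_div, abs_neg]
      rw [heq] at h
      exact h
  calc ∑ i, ∫ x in (a i)..(b i), |deriv (ψ i) x / (q * Real.pi)| ^ t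
      ≤ ∑ _i : Fin q, D0 := Finset.sum_le_sum (fun i _ => hband i)
    _ = q * D0 := by
        rw [Finset.sum_const, Finset.card_univ, Fintype.card_fin, nsmul_eq_mul]
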